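/- Let K ≥ 1 be an integer, L > 0, 0 < α ≤ 1/(4L), and C_f, M₁, M_f ≥ 0. Let e_0, ..., e_{K−1} ≥ 0 and β_0, ..., β_{K−1} ≥ 0 satisfy β_k ≤ M₁/(K+1) for all k and Σ_{k=0}^{K−1} (α/2 − Lα²) e_k ≤ Σ_{k=0}^{K−1} ( α C_f √(β_k) + L α² β_k ) + M_f. Then (1/K) Σ_{k=0}^{K−1} e_k ≤ 4 C_f √(M₁) · K^{−1/2} + 4 L α M₁ · K^{−1} + 4 M_f/(α K). -/

import Mathlib

/-- Deterministic form of Corollary 4.1(a): with fixed outer step `α ≤ 1/(4L)` and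
inner-iteration error bounds `β k ≤ M₁/(K+1)` (from `S = (K+1)²` inner steps),
the averaged quantities `e k` satisfy
`(1/K) Σ e_k ≤ 4 C_f √M₁ / √K + 4 L α M₁ / K + 4 M_f/(α K)`. -/
theorem msmd_rate_fixed_inner_fixed_outer
    (K : ℕ) (hK : 1 ≤ K)
    (L α Cf M₁ Mf : ℝ)
    (hL : 0 < L) (hα0 : 0 < α) (hα : α ≤ 1 / (4 * L))
    (hCf : 0 ≤ Cf) (hM₁ : 0 ≤ M₁) (hMf : 0 ≤ Mf)
    (e β : ℕ → ℝ)
    (he : ∀ k < K, 0 ≤ e k) (hβ0 : ∀ k < K, 0 ≤ β k)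
    (hβ : ∀ k < K, β k ≤ M₁ / (K + 1))
    (hsum : ∑ k ∈ Finset.range K, (α / 2 - L * α ^ 2) * e k ≤
      (∑ k ∈ Finset.range K, (α * Cf * Real.sqrt (β k) + L * α ^ 2 * β k)) + Mf) :
    (1 / K) * ∑ k ∈ Finset.range K, e k ≤
      4 * Cf * Real.sqrt M₁ / Real.sqrt K + 4 * L * α * M₁ / K + 4 * Mf / (α * K) := by
  have hK1 : (1:ℝ) ≤ (K:ℝ) := by exact_mod_cast hK
  have hKpos : (0:ℝ) < K := lt_of_lt_of_le one_pos hK1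
  rw [le_div_iff₀ (by positivity)] at hα
  have hLα : L * α ≤ 1/4 := by nlinarith
  have hcoef : α/4 ≤ α/2 - L * α^2 := by nlinarith [sq_nonneg α, mul_pos hα0 hα0]
  set c : ℝ := Real.sqrt M₁ / Real.sqrt K with hc
  have hc0 : 0 ≤ c := by positivity
  have hβK : ∀ k < K, β k ≤ M₁ / K := fun k hk =>
    (hβ k hk).trans (by
      apply div_le_div_of_nonneg_left hM₁ hKpos
      linarith)
  have hsqrt : ∀ k < K, Real.sqrt (β k) ≤ c := by
    intro k hk
    rw [hc, ← Real.sqrt_div hM₁]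
    exact Real.sqrt_le_sqrt (hβK k hk)
  have main : (α/4) * ∑ k ∈ Finset.range K, e k ≤
      (K:ℝ) * (α * Cf * c + L * α^2 * (M₁ / K)) + Mf := by
    calc (α/4) * ∑ k ∈ Finset.range K, e k
        = ∑ k ∈ Finset.range K, (α/4) * e k := by rw [Finset.mul_sum]
      _ ≤ ∑ k ∈ Finset.range K, (α / 2 - L * α ^ 2) * e k := by
          apply Finset.sum_le_sum
          intro k hk
          exact mul_le_mul_of_nonneg_right hcoef (he k (Finset.mem_range.mp hk))
      _ ≤ (∑ k ∈ Finset.range K, (α * Cf * Real.sqrt (β k) + L * α ^ 2 * β k)) + Mf := hsum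
      _ ≤ (∑ k ∈ Finset.range K, (α * Cf * c + L * α^2 * (M₁ / K))) + Mf := by
          refine add_le_add ?_ le_rfl
          apply Finset.sum_le_sum
          intro k hk
          exact add_le_add
              (mul_le_mul_of_nonneg_left (hsqrt k (Finset.mem_range.mp hk)) (by positivity))
              (mul_le_mul_of_nonneg_left (hβK k (Finset.mem_range.mp hk)) (by positivity))
      _ = (K:ℝ) * (α * Cf * c + L * α^2 * (M₁ / K)) + Mf := by
          rw [Finset.sum_const, Finset.card_range, nsmul_eq_mul]
  have hKne : (K:ℝ) ≠ 0 := ne_of_gt hKpos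
  have hαne : α ≠ 0 := ne_of_gt hα0
  have hgoal : 4 * Cf * Real.sqrt M₁ / Real.sqrt K = 4 * Cf * c := by
    rw [hc]; ring
  rw [hgoal, one_div_mul_eq_div, div_le_iff₀ hKpos]
  have hmain' : (K:ℝ) * (α * Cf * c + L * α^2 * (M₁ / K)) + Mf
      = (K:ℝ) * α * Cf * c + L * α^2 * M₁ + Mf := by
    field_simp
  rw [hmain'] at main
  rw [show (4 * Cf * c + 4 * L * α * M₁ / K + 4 * Mf / (α * K)) * K
      = 4 * Cf * c * K + 4 * L * α * M₁ + 4 * Mf / α by field_simp]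
  have h4 : 4 * Mf / α * α = 4 * Mf := by field_simp
  nlinarith [main, h4, hα0, hc0, hKpos, mul_pos hα0 hKpos]
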